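/- Let a, α, β, n be positive integers with 2 ≤ β ≤ α, 0 < a < α, gcd(a, α) = 1, and n ≤ ⌊(α+1)/2⌋. Then l(1/α(a, -a, 1), n) ≥ l(1/β(1, -1, 1), n). -/
import Mathlib


/-- The Reid correction term `l(r, b, m) = ∑_{j=1}^{m-1} \overline{bj}(r-\overline{bj})/(2r)`,
where `\overline{bj}` is the smallest non-negative residue of `b*j` mod `r`.
(The `j = 0` term vanishes, so we may sum over `j ∈ range m`.) -/
def reidL (r b m : ℕ) : ℚ :=
  ∑ j ∈ Finset.range m,
    (((b * j) % r : ℕ) : ℚ) * ((r : ℚ) - (((b * j) % r : ℕ) : ℚ)) / (2 * r)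

/-- A basket of type `1/r(a, -a, 1)`: a pair of integers `(r, a)` with `r ≥ 2`,
`0 < a < r` and `gcd(a, r) = 1`. -/
structure Basket where
  r : ℕ
  a : ℕ
  two_le_r : 2 ≤ r
  a_pos : 0 < a
  a_lt_r : a < r
  coprime : Nat.Coprime a r

/-- The unique `b` with `0 < b < r` and `a * b ≡ 1 (mod r)`. -/
def Basket.binv (Q : Basket) : ℕ := ((Q.a : ZMod Q.r)⁻¹).val

/-- The correction term `l(Q, m)` of a basket. -/
def Basket.l (Q : Basket) (m : ℕ) : ℚ := reidL Q.r Q.binv m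

/-- `Δ_n(Q) := n² l(Q,2) + l(Q,n) - l(Q,n+1)`. -/
def Basket.delta (Q : Basket) (n : ℕ) : ℚ :=
  (n : ℚ) ^ 2 * Q.l 2 + Q.l n - Q.l (n + 1)

/-- A formal basket datum with `χ = 1`: a finite multiset of baskets together
with a positive rational number `K`. -/
structure FormalDatum where
  B : Multiset Basket
  K : ℚ
  K_pos : 0 < K

/-- The formal plurigenus `P(m) = (1/12)m(m-1)(2m-1)K - (2m-1) + ∑_{Q ∈ B} l(Q, m)`. -/
def FormalDatum.P (D : FormalDatum) (m : ℕ) : ℚ :=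
  (1 / 12 : ℚ) * m * (m - 1) * (2 * m - 1) * D.K - (2 * m - 1)
    + (D.B.map (fun Q => Q.l m)).sum

/-- Rearrangement-type lemma: if `d` is injective on `s` with values in `[1, M]`,
and `f` is monotone on `[1, M]`, then `∑_{j=1}^{|s|} f j ≤ ∑_{j∈s} f (d j)`. -/
lemma key_sum_lemma (f : ℕ → ℚ) (M : ℕ)
    (hf : ∀ i j, 1 ≤ i → i ≤ j → j ≤ M → f i ≤ f j) (d : ℕ → ℕ) :
    ∀ s : Finset ℕ, (∀ j ∈ s, 1 ≤ d j ∧ d j ≤ M) → Set.InjOn d ↑s →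
      ∑ j ∈ Finset.Icc 1 s.card, f j ≤ ∑ j ∈ s, f (d j) := by
  intro s
  induction s using Finset.strongInduction with
  | _ s ih =>
    intro hd hinj
    rcases s.eq_empty_or_nonempty with rfl | hne
    · simp
    obtain ⟨j0, hj0, hmax⟩ := Finset.exists_max_image s d hne
    have hcard : s.card = (s.erase j0).card + 1 := by
      rw [Finset.card_erase_of_mem hj0]
      have := Finset.card_pos.2 hne
      omega
    have hsub : s.erase j0 ⊂ s := Finset.erase_ssubset hj0
    have ih' := ih (s.erase j0) hsub
      (fun j hj => hd j (Finset.mem_of_mem_erase hj))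
      (hinj.mono (by exact_mod_cast Finset.erase_subset j0 s))
    have hcardle : s.card ≤ d j0 := by
      have h1 : (s.image d).card = s.card := Finset.card_image_of_injOn hinj
      have h2 : s.image d ⊆ Finset.Icc 1 (d j0) := by
        intro x hx
        obtain ⟨j, hj, rfl⟩ := Finset.mem_image.1 hx
        exact Finset.mem_Icc.2 ⟨(hd j hj).1, hmax j hj⟩
      have := Finset.card_le_card h2
      rw [h1, Nat.card_Icc] at this
      omega
    have hflast : f s.card ≤ f (d j0) :=
      hf s.card (d j0) (Finset.card_pos.2 hne) hcardle (hd j0 hj0).2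
    calc ∑ j ∈ Finset.Icc 1 s.card, f j
        = ∑ j ∈ Finset.Icc 1 (s.erase j0).card, f j + f ((s.erase j0).card + 1) := by
          rw [hcard]; exact Finset.sum_Icc_succ_top (by omega) f
      _ ≤ ∑ j ∈ s.erase j0, f (d j) + f (d j0) := by
          apply add_le_add ih'
          rw [← hcard]; exact hflast
      _ = ∑ j ∈ s, f (d j) := by
          rw [add_comm]; exact Finset.add_sum_erase s (fun j => f (d j)) hj0

/-- The main inequality with plain variables: if `gcd(b,α)=1`, `2 ≤ β ≤ α`,
`0 < n ≤ ⌊(α+1)/2⌋`, then `l(β,1,n) ≤ l(α,b,n)`. -/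
lemma reidL_le_reidL_aux (α β b n : ℕ) (hα2 : 2 ≤ α) (hβ : 2 ≤ β) (hβα : β ≤ α)
    (hbcop : Nat.Coprime b α) (hn : 0 < n) (hle : n ≤ (α + 1) / 2) :
    reidL β 1 n ≤ reidL α b n := by
  have h2n : 2 * n ≤ α + 1 := by
    have := Nat.div_mul_le_self (α + 1) 2
    omega
  have hαQ : (0:ℚ) < (α:ℚ) := by exact_mod_cast (by omega : 0 < α)
  have hβQ : (0:ℚ) < (β:ℚ) := by exact_mod_cast (by omega : 0 < β)
  -- Step A: reidL β 1 n ≤ reidL α 1 n, termwise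
  have stepA : reidL β 1 n ≤ reidL α 1 n := by
    unfold reidL
    apply Finset.sum_le_sum
    intro j hj
    have hjn : j < n := Finset.mem_range.1 hj
    have h2j : 2 * j + 1 ≤ α := by omega
    have hjα : (1 * j) % α = j := by
      rw [one_mul]; exact Nat.mod_eq_of_lt (by omega)
    rw [hjα]
    set x := (1 * j) % β with hx
    have hxβ : x < β := Nat.mod_lt _ (by omega)
    have hxj : x ≤ j := by rw [hx, one_mul]; exact Nat.mod_le _ _
    rw [div_le_div_iff₀ (by positivity) (by positivity)]
    have hxQ : ((x:ℚ)) ≤ (j:ℚ) := by exact_mod_cast hxj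
    have hxβQ : ((x:ℚ)) ≤ (β:ℚ) := by exact_mod_cast hxβ.le
    have hβαQ : ((β:ℚ)) ≤ (α:ℚ) := by exact_mod_cast hβα
    have h2jQ : 2 * (j:ℚ) + 1 ≤ (α:ℚ) := by exact_mod_cast h2j
    have hx0 : (0:ℚ) ≤ (x:ℚ) := Nat.cast_nonneg _
    nlinarith [mul_nonneg (mul_nonneg hβQ.le (sub_nonneg.2 hxQ))
        (by linarith : (0:ℚ) ≤ (α:ℚ) - (j:ℚ) - (x:ℚ)),
      mul_nonneg (sub_nonneg.2 hβαQ) (mul_self_nonneg (x:ℚ))]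
  refine stepA.trans ?_
  -- Step B: reidL α 1 n ≤ reidL α b n
  unfold reidL
  set f : ℕ → ℚ := fun t => (t:ℚ) * ((α:ℚ) - (t:ℚ)) / (2 * α) with hf
  set d : ℕ → ℕ := fun j => min ((b * j) % α) (α - (b * j) % α) with hd
  have hmono : ∀ i j, 1 ≤ i → i ≤ j → j ≤ α / 2 → f i ≤ f j := by
    intro i j h1 h2 h3
    simp only [hf]
    rw [div_le_div_iff₀ (by positivity) (by positivity)]
    have hiQ : ((i:ℚ)) ≤ (j:ℚ) := by exact_mod_cast h2
    have h2jQ : 2 * (j:ℚ) ≤ (α:ℚ) := by exact_mod_cast (by omega : 2 * j ≤ α)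
    have hi0 : (0:ℚ) ≤ (i:ℚ) := Nat.cast_nonneg _
    nlinarith [mul_nonneg (sub_nonneg.2 hiQ)
      (by linarith : (0:ℚ) ≤ (α:ℚ) - (i:ℚ) - (j:ℚ))]
  -- nonvanishing of residues
  have hres : ∀ j, 1 ≤ j → j < α → (b * j) % α ≠ 0 := by
    intro j h1 h2 h0
    have hd1 : α ∣ b * j := Nat.dvd_of_mod_eq_zero h0
    have hd2 : α ∣ j := Nat.Coprime.dvd_of_dvd_mul_left (Nat.Coprime.symm hbcop) hd1
    have := Nat.le_of_dvd (by omega) hd2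
    omega
  -- f of residue equals f of d
  have hfd : ∀ j, f ((b * j) % α) = f (d j) := by
    intro j
    have hxlt : (b * j) % α < α := Nat.mod_lt _ (by omega)
    simp only [hf, hd]
    congr 1
    set x := (b * j) % α
    rcases le_total x (α - x) with h | h
    · rw [min_eq_left h]
    · rw [min_eq_right h]
      have hsub : ((α - x : ℕ) : ℚ) = (α:ℚ) - (x:ℚ) := by
        push_cast [Nat.cast_sub hxlt.le]; ring
      rw [hsub]
      ring
  -- injectivity of d on Ico 1 n
  have hinjd : Set.InjOn d ↑(Finset.Ico 1 n) := by
    intro i hi j hj hij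
    simp only [Finset.coe_Ico, Set.mem_Ico] at hi hj
    have hiα : i < α := by omega
    have hjα : j < α := by omega
    have hxi := hres i hi.1 hiα
    have hxj := hres j hj.1 hjα
    have hxilt : (b * i) % α < α := Nat.mod_lt _ (by omega)
    have hxjlt : (b * j) % α < α := Nat.mod_lt _ (by omega)
    simp only [hd] at hij
    have hcase : (b * i) % α = (b * j) % α ∨ (b * i) % α + (b * j) % α = α := by
      rcases le_total ((b * i) % α) (α - (b * i) % α) with h1 | h1 <;>
        rcases le_total ((b * j) % α) (α - (b * j) % α) with h2 | h2 <;>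
        [rw [min_eq_left h1, min_eq_left h2] at hij;
         rw [min_eq_left h1, min_eq_right h2] at hij;
         rw [min_eq_right h1, min_eq_left h2] at hij;
         rw [min_eq_right h1, min_eq_right h2] at hij] <;> omega
    rcases hcase with hc | hc
    · have h1 : b * i ≡ b * j [MOD α] := Nat.ModEq.trans (Nat.mod_modEq _ _).symm
        (by rw [hc]; exact Nat.mod_modEq _ _)
      have h2 : i ≡ j [MOD α] :=
        Nat.ModEq.cancel_left_of_coprime (by rwa [Nat.coprime_comm] at hbcop) h1
      exact Nat.ModEq.eq_of_lt_of_lt h2 hiα hjα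
    · exfalso
      have hmod : (b * i + b * j) % α = 0 := by
        rw [Nat.add_mod, hc, Nat.mod_self]
      have hdvd : α ∣ b * (i + j) := by
        rw [Nat.mul_add]; exact Nat.dvd_of_mod_eq_zero hmod
      have hdvd2 : α ∣ i + j := Nat.Coprime.dvd_of_dvd_mul_left (Nat.Coprime.symm hbcop) hdvd
      have hlow : 0 < i + j := by omega
      have := Nat.le_of_dvd hlow hdvd2
      omega
  -- bounds on d
  have hdbd : ∀ j ∈ Finset.Ico 1 n, 1 ≤ d j ∧ d j ≤ α / 2 := by
    intro j hj
    rw [Finset.mem_Ico] at hj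
    have hjα : j < α := by omega
    have hx := hres j hj.1 hjα
    have hxlt : (b * j) % α < α := Nat.mod_lt _ (by omega)
    simp only [hd]
    omega
  have key := key_sum_lemma f (α / 2) hmono d (Finset.Ico 1 n) hdbd hinjd
  have hcardIco : (Finset.Ico 1 n).card = n - 1 := by rw [Nat.card_Ico]
  have hIccIco : Finset.Icc 1 (n - 1) = Finset.Ico 1 n := by
    ext x
    rw [Finset.mem_Icc, Finset.mem_Ico]
    omega
  rw [hcardIco, hIccIco] at key
  have hL : ∑ j ∈ Finset.range n,
      (((1 * j) % α : ℕ) : ℚ) * ((α : ℚ) - (((1 * j) % α : ℕ) : ℚ)) / (2 * α)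
      = ∑ j ∈ Finset.Ico 1 n, f j := by
    rw [Finset.range_eq_Ico, Finset.sum_eq_sum_Ico_succ_bot hn]
    have h0 : ((1 * 0) % α : ℕ) = 0 := by simp
    rw [h0]
    simp only [Nat.cast_zero, zero_mul, zero_div, zero_add]
    apply Finset.sum_congr rfl
    intro j hj
    rw [Finset.mem_Ico] at hj
    have hje : (1 * j) % α = j := by rw [one_mul]; exact Nat.mod_eq_of_lt (by omega)
    rw [hje]
  have hR : ∑ j ∈ Finset.range n,
      (((b * j) % α : ℕ) : ℚ) * ((α : ℚ) - (((b * j) % α : ℕ) : ℚ)) / (2 * α)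
      = ∑ j ∈ Finset.Ico 1 n, f (d j) := by
    rw [Finset.range_eq_Ico, Finset.sum_eq_sum_Ico_succ_bot hn]
    have h0 : ((b * 0) % α : ℕ) = 0 := by simp
    rw [h0]
    simp only [Nat.cast_zero, zero_mul, zero_div, zero_add]
    exact Finset.sum_congr rfl fun j _ => hfd j
  rw [hL, hR]
  exact key

theorem basket_l_ge_reidL_one_smaller (Q : Basket) (β n : ℕ) (hβ : 2 ≤ β)
    (hβα : β ≤ Q.r) (hn : 0 < n) (hle : n ≤ (Q.r + 1) / 2) :
    reidL β 1 n ≤ Q.l n := by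
  haveI : NeZero Q.r := ⟨by have := Q.two_le_r; omega⟩
  have hbcop : Nat.Coprime Q.binv Q.r := by
    have h1 : ((Q.a : ZMod Q.r))⁻¹ = ((ZMod.unitOfCoprime Q.a Q.coprime)⁻¹ : (ZMod Q.r)ˣ) := by
      rw [← ZMod.inv_coe_unit, ZMod.coe_unitOfCoprime]
    show Nat.Coprime ((Q.a : ZMod Q.r)⁻¹).val Q.r
    rw [h1]
    exact ZMod.val_coe_unit_coprime _
  exact reidL_le_reidL_aux Q.r β Q.binv n Q.two_le_r hβ hβα hbcop hn hle
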